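/- Let X be a compact metric space and f : X → X a continuous map. If U ⊆ X is a trapping region, then Inv(U) = Inv(cl(U)) = ω(U), and this set is compact. -/

import Mathlib

open Set

/-- The maximal invariant set in `U`: the union of all subsets `S ⊆ U` with `f '' S = S`. -/
def MaxInv {Y : Type*} (f : Y → Y) (U : Set Y) : Set Y :=
  ⋃₀ {S : Set Y | S ⊆ U ∧ f '' S = S}

/-- The maximal forward invariant set in `U`: the union of all subsets `S ⊆ U`
with `f '' S ⊆ S`. -/
def MaxInvPlus {Y : Type*} (f : Y → Y) (U : Set Y) : Set Y :=
  ⋃₀ {S : Set Y | S ⊆ U ∧ f '' S ⊆ S}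

/-- The omega-limit set `ω(U) = ⋂_{n ≥ 0} cl (⋃_{m ≥ n} f^[m] '' U)`. -/
def OmegaLim {Y : Type*} [TopologicalSpace Y] (f : Y → Y) (U : Set Y) : Set Y :=
  ⋂ n : ℕ, closure (⋃ m ≥ n, f^[m] '' U)

/-- The alpha-limit set `α(U) = ⋂_{n ≥ 0} cl (⋃_{m ≥ n} (f^[m]) ⁻¹' U)`. -/
def AlphaLim {Y : Type*} [TopologicalSpace Y] (f : Y → Y) (U : Set Y) : Set Y :=
  ⋂ n : ℕ, closure (⋃ m ≥ n, f^[m] ⁻¹' U)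

/-- A trapping region: a forward invariant set `U` with `f^[n] '' cl U ⊆ int U`
for some `n ≥ 1`. -/
def IsTrappingRegion {Y : Type*} [TopologicalSpace Y] (f : Y → Y) (U : Set Y) : Prop :=
  f '' U ⊆ U ∧ ∃ n : ℕ, 1 ≤ n ∧ f^[n] '' closure U ⊆ interior U

/-- An attractor: `A = Inv(U)` for some trapping region `U`. -/
def IsAttractor {Y : Type*} [TopologicalSpace Y] (f : Y → Y) (A : Set Y) : Prop :=
  ∃ U : Set Y, IsTrappingRegion f U ∧ A = MaxInv f U

/-- An attracting neighborhood: `ω(U) ⊆ int U`. -/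
def IsAttractingNbhd {Y : Type*} [TopologicalSpace Y] (f : Y → Y) (U : Set Y) : Prop :=
  OmegaLim f U ⊆ interior U

/-- A repelling region: a backward invariant set `U` with `(f^[n]) ⁻¹' cl U ⊆ int U`
for some `n ≥ 1`. -/
def IsRepellingRegion {Y : Type*} [TopologicalSpace Y] (f : Y → Y) (U : Set Y) : Prop :=
  f ⁻¹' U ⊆ U ∧ ∃ n : ℕ, 1 ≤ n ∧ f^[n] ⁻¹' closure U ⊆ interior U

/-- A repeller: `R = Inv⁺(U)` for some repelling region `U`. -/
def IsRepeller {Y : Type*} [TopologicalSpace Y] (f : Y → Y) (R : Set Y) : Prop :=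
  ∃ U : Set Y, IsRepellingRegion f U ∧ R = MaxInvPlus f U

/-- A repelling neighborhood: `α(U) ⊆ int U`. -/
def IsRepellingNbhd {Y : Type*} [TopologicalSpace Y] (f : Y → Y) (U : Set Y) : Prop :=
  AlphaLim f U ⊆ interior U

/-- A backward orbit: a sequence `γ : ℕ → Y` with `f (γ (k+1)) = γ k` for all `k`.
A backward orbit through `x` additionally satisfies `γ 0 = x`. -/
def IsBackwardOrbit {Y : Type*} (f : Y → Y) (γ : ℕ → Y) : Prop :=
  ∀ k : ℕ, f (γ (k + 1)) = γ k

/-- The orbital alpha-limit set `α_o(γ) = ⋂_{n ≥ 0} cl {γ m : m ≥ n}`. -/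
def OrbAlpha {Y : Type*} [TopologicalSpace Y] (γ : ℕ → Y) : Set Y :=
  ⋂ n : ℕ, closure (γ '' {m : ℕ | n ≤ m})

/-- The dual repeller of an attractor `A`: `A* = {x : ω(x) ∩ A = ∅}`. -/
def DualRepeller {Y : Type*} [TopologicalSpace Y] (f : Y → Y) (A : Set Y) : Set Y :=
  {x : Y | OmegaLim f {x} ∩ A = ∅}

/-- The dual attractor of a repeller `R`:
`R* = {x : ∃ backward orbit γ through x with α_o(γ) ∩ R = ∅}`. -/
def DualAttractor {Y : Type*} [TopologicalSpace Y] (f : Y → Y) (R : Set Y) : Set Y :=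
  {x : Y | ∃ γ : ℕ → Y, γ 0 = x ∧ IsBackwardOrbit f γ ∧ OrbAlpha γ ∩ R = ∅}

section Aux
variable {Y : Type*}

lemma iterImage_of_inv (f : Y → Y) {S : Set Y} (h : f '' S = S) (m : ℕ) :
    f^[m] '' S = S := by
  induction m with
  | zero => simp
  | succ k ih => rw [Function.iterate_succ', Set.image_comp, ih, h]

lemma iterImage_subset (f : Y → Y) {U : Set Y} (h : f '' U ⊆ U) (m : ℕ) :
    f^[m] '' U ⊆ U := by
  induction m with
  | zero => simp
  | succ k ih =>
      rw [Function.iterate_succ', Set.image_comp]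
      exact (Set.image_mono (f := f) ih).trans h

lemma maxInv_subset (f : Y → Y) (V : Set Y) : MaxInv f V ⊆ V :=
  Set.sUnion_subset fun _ hS => hS.1

lemma subset_maxInv (f : Y → Y) {V S : Set Y} (h1 : S ⊆ V) (h2 : f '' S = S) :
    S ⊆ MaxInv f V := Set.subset_sUnion_of_mem ⟨h1, h2⟩

lemma maxInv_image (f : Y → Y) (V : Set Y) : f '' MaxInv f V = MaxInv f V := by
  apply subset_antisymm
  · rintro _ ⟨x, hx, rfl⟩
    obtain ⟨S, hS, hxS⟩ := hx
    exact ⟨S, hS, hS.2 ▸ Set.mem_image_of_mem f hxS⟩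
  · rintro x ⟨S, hS, hxS⟩
    have hx : x ∈ f '' S := hS.2.symm ▸ hxS
    exact Set.image_mono (f := f) (Set.subset_sUnion_of_mem hS) hx

end Aux

/-- For a trapping region `U`, `Inv(U) = Inv(cl U) = ω(U)` is
compact. -/
theorem trappingRegion_maxInv_eq_omega
    {X : Type*} [MetricSpace X] [CompactSpace X]
    (f : X → X) (hf : Continuous f) (U : Set X) (hU : IsTrappingRegion f U) :
    MaxInv f U = MaxInv f (closure U) ∧
    MaxInv f U = OmegaLim f U ∧
    IsCompact (MaxInv f U) := by
  obtain ⟨hfwd, n₀, hn₀, htrap⟩ := hU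
  -- auxiliary sets
  set A : ℕ → Set X := fun n => ⋃ m ≥ n, f^[m] '' U with hA
  have hAdef : OmegaLim f U = ⋂ n, closure (A n) := rfl
  have hAsubU : ∀ n, A n ⊆ U := by
    intro n x hx
    simp only [hA, Set.mem_iUnion] at hx
    obtain ⟨m, _, hm⟩ := hx
    exact iterImage_subset f hfwd m hm
  have hAmono : ∀ {n m : ℕ}, n ≤ m → A m ⊆ A n := by
    intro n m hnm x hx
    simp only [hA, Set.mem_iUnion] at hx ⊢
    obtain ⟨k, hk, hkx⟩ := hx
    exact ⟨k, hnm.trans hk, hkx⟩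
  have hmemA : ∀ n m, n ≤ m → f^[m] '' U ⊆ A n := by
    intro n m hnm x hx
    simp only [hA, Set.mem_iUnion]
    exact ⟨m, hnm, hx⟩
  have hfA : ∀ n, f '' A n ⊆ A n := by
    rintro n _ ⟨x, hx, rfl⟩
    simp only [hA, Set.mem_iUnion] at hx
    obtain ⟨m, hm, u, hu, rfl⟩ := hx
    refine hmemA n (m + 1) (hm.trans (Nat.le_succ m)) ?_
    exact ⟨u, hu, by rw [Function.iterate_succ']; rfl⟩
  set W := OmegaLim f U with hWdef
  -- claim A : any invariant subset of closure U is contained in U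
  have claimA : ∀ S : Set X, f '' S = S → S ⊆ closure U → S ⊆ U := by
    intro S hinv hsub
    calc S = f^[n₀] '' S := (iterImage_of_inv f hinv n₀).symm
    _ ⊆ f^[n₀] '' closure U := Set.image_mono hsub
    _ ⊆ interior U := htrap
    _ ⊆ U := interior_subset
  -- W ⊆ closure U
  have hWclU : W ⊆ closure U := fun x hx => by
    have := Set.mem_iInter.1 hx 0
    exact closure_mono (hAsubU 0) this
  -- f '' W ⊆ W
  have hWfwd : f '' W ⊆ W := by
    rintro _ ⟨x, hx, rfl⟩
    refine Set.mem_iInter.2 fun n => ?_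
    have hx' : x ∈ closure (A n) := Set.mem_iInter.1 hx n
    have : f x ∈ closure (f '' A n) :=
      (image_closure_subset_closure_image hf) (Set.mem_image_of_mem f hx')
    exact closure_mono (hfA n) this
  -- W ⊆ f '' W
  have hWbwd : W ⊆ f '' W := by
    intro y hy
    -- choose approximating points
    have hchoice : ∀ n : ℕ, ∃ u : X, u ∈ U ∧ ∃ m : ℕ, n + 1 ≤ m ∧
        dist y (f^[m] u) < 1 / (n + 1) := by
      intro n
      have hyc : y ∈ closure (A (n + 1)) := Set.mem_iInter.1 hy (n + 1)
      have hpos : (0 : ℝ) < 1 / (n + 1) := by positivity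
      obtain ⟨p, hp, hd⟩ := Metric.mem_closure_iff.1 hyc _ hpos
      simp only [hA, Set.mem_iUnion] at hp
      obtain ⟨m, hm, u, hu, rfl⟩ := hp
      exact ⟨u, hu, m, hm, hd⟩
    choose u huU m hm hd using hchoice
    set q : ℕ → X := fun n => f^[m n - 1] (u n) with hq
    have hfq : ∀ n, f (q n) = f^[m n] (u n) := by
      intro n
      have h1 : 1 ≤ m n := le_trans (Nat.le_add_left 1 n) (hm n)
      have : m n - 1 + 1 = m n := Nat.succ_pred_eq_of_pos h1
      rw [hq]
      simp only
      rw [← Function.iterate_succ_apply' f (m n - 1) (u n), Nat.succ_eq_add_one, this]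
    have hptends : Filter.Tendsto (fun n => f^[m n] (u n)) Filter.atTop (nhds y) := by
      rw [tendsto_iff_dist_tendsto_zero]
      apply squeeze_zero (fun n => dist_nonneg) (fun n => (dist_comm (f^[m n] (u n)) y ▸ (hd n).le))
      exact tendsto_one_div_add_atTop_nhds_zero_nat
    obtain ⟨x, -, φ, hφ, hx⟩ := isCompact_univ.tendsto_subseq (fun n => Set.mem_univ (q n))
    have hfx : f x = y := by
      have h1 : Filter.Tendsto (fun j => f (q (φ j))) Filter.atTop (nhds (f x)) :=
        (hf.tendsto x).comp hx
      have h2 : Filter.Tendsto (fun j => f (q (φ j))) Filter.atTop (nhds y) := by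
        simp only [hfq]
        exact hptends.comp hφ.tendsto_atTop
      exact tendsto_nhds_unique h1 h2
    refine ⟨x, ?_, hfx⟩
    refine Set.mem_iInter.2 fun N => ?_
    apply mem_closure_of_tendsto hx
    filter_upwards [Filter.eventually_ge_atTop N] with j hj
    have hφj : N ≤ φ j := hj.trans (hφ.le_apply)
    have hqmem : q (φ j) ∈ A (φ j) := by
      refine hmemA (φ j) (m (φ j) - 1) ?_ ⟨u (φ j), huU (φ j), rfl⟩
      have := hm (φ j)
      omega
    exact hAmono hφj hqmem
  have hWinv : f '' W = W := subset_antisymm hWfwd hWbwd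
  have hWU : W ⊆ U := claimA W hWinv hWclU
  -- MaxInv f U ⊆ W
  have hMI_W : MaxInv f U ⊆ W := by
    rintro x ⟨S, ⟨hSU, hSinv⟩, hxS⟩
    refine Set.mem_iInter.2 fun N => ?_
    apply subset_closure
    have : x ∈ f^[N] '' S := (iterImage_of_inv f hSinv N).symm ▸ hxS
    exact hmemA N N le_rfl (Set.image_mono hSU this)
  have hW_MI : W ⊆ MaxInv f U := subset_maxInv f hWU hWinv
  have hMIeqW : MaxInv f U = W := subset_antisymm hMI_W hW_MI
  have hWclosed : IsClosed W := isClosed_iInter fun n => isClosed_closure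
  refine ⟨?_, hMIeqW, hMIeqW ▸ hWclosed.isCompact⟩
  apply subset_antisymm
  · exact Set.sUnion_subset fun S hS =>
      subset_maxInv f (hS.1.trans subset_closure) hS.2
  · exact Set.sUnion_subset fun S hS =>
      subset_maxInv f (claimA S hS.2 hS.1) hS.2
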